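/- Let N ≥ 1 be an integer and let X, Y, Z be mutually independent random variables each with the Gamma(N,1) distribution. Let a, b, κ, γ > 0 with a ≠ b. Then lim_{ρ→∞} ρ^N · Prob( κ·ρ·(a·X + b·Y)·Z < γ ) = (γ/κ)^N · E[ (a·X + b·Y)^{−N} ] / Γ(N+1), and the expectation E[(aX+bY)^{−N}] is finite. -/

import Mathlib

open MeasureTheory ProbabilityTheory Filter

namespace SecondHopAux

open Set

lemma iIndepFun_congr_ae {Ω ι : Type*} [MeasurableSpace Ω] {μ : Measure Ω}
    {β : ι → Type*} {m : ∀ i, MeasurableSpace (β i)} {f g : ∀ i, Ω → β i}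
    (hfg : ∀ i, f i =ᵐ[μ] g i) (hf : iIndepFun f μ) : iIndepFun g μ := by
  rw [iIndepFun_iff_measure_inter_preimage_eq_mul] at hf ⊢
  intro S sets hsets
  have h1 : ∀ i, μ (g i ⁻¹' sets i) = μ (f i ⁻¹' sets i) := by
    intro i
    refine measure_congr (Filter.eventuallyEq_set.2 ?_)
    filter_upwards [hfg i] with ω h
    simp [Set.mem_preimage, h]
  have h2 : μ (⋂ i ∈ S, g i ⁻¹' sets i) = μ (⋂ i ∈ S, f i ⁻¹' sets i) := by
    refine measure_congr (Filter.eventuallyEq_set.2 ?_)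
    have : ∀ᵐ ω ∂μ, ∀ i ∈ S, f i ω = g i ω :=
      (Filter.eventually_all_finset S).2 fun i _ => hfg i
    filter_upwards [this] with ω h
    simp only [Set.mem_iInter, Set.mem_preimage]
    exact ⟨fun hω i hi => (h i hi) ▸ hω i hi, fun hω i hi => (h i hi).symm ▸ hω i hi⟩
  rw [h2, hf S hsets]
  exact Finset.prod_congr rfl fun i hi => (h1 i).symm

lemma gamma_Iic_zero (N : ℕ) : gammaMeasure N 1 (Iic 0) = 0 := by
  rw [gammaMeasure, withDensity_apply _ measurableSet_Iic,
    lintegral_Iic_eq_lintegral_Iio_add_Icc _ (le_refl (0:ℝ)),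
    lintegral_gammaPDF_of_nonpos (le_refl (0:ℝ))]
  simp only [Set.Icc_self, zero_add]
  rw [setLIntegral_measure_zero _ _ (by simp)]

lemma gamma_pos_ae (N : ℕ) : ∀ᵐ x ∂(gammaMeasure N 1), 0 < x := by
  rw [MeasureTheory.ae_iff]
  have : {x : ℝ | ¬ 0 < x} = Iic 0 := by ext x; simp [not_lt]
  rw [this]
  exact gamma_Iic_zero N

lemma rpow_int_Ioc {N : ℕ} (hN : 1 ≤ N) {t : ℝ} (ht : 0 ≤ t) :
    ∫ x in Ioc (0:ℝ) t, x ^ ((N:ℝ) - 1) = t ^ N / N := by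
  have hNR : (0:ℝ) < N := by exact_mod_cast hN
  rw [← intervalIntegral.integral_of_le ht,
    integral_rpow (Or.inl (by linarith : (-1:ℝ) < (N:ℝ) - 1))]
  have h1 : (N:ℝ) - 1 + 1 = (N:ℝ) := by ring
  rw [h1, Real.zero_rpow hNR.ne', Real.rpow_natCast]
  ring

lemma gamma_Iio_eq (N : ℕ) {t : ℝ} (ht : 0 ≤ t) :
    gammaMeasure N 1 (Iio t) = ∫⁻ x in Ioc (0:ℝ) t, gammaPDF N 1 x := by
  rw [gammaMeasure, withDensity_apply _ measurableSet_Iio]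
  have hsplit : Iio t = Iio 0 ∪ Ico 0 t := by
    ext x
    simp only [mem_Iio, mem_union, mem_Ico]
    constructor
    · intro hx
      rcases lt_or_ge x 0 with h | h
      · exact Or.inl h
      · exact Or.inr ⟨h, hx⟩
    · rintro (h | ⟨_, h⟩)
      · exact lt_of_lt_of_le h ht
      · exact h
  rw [hsplit, lintegral_union measurableSet_Ico
      (by simp [Set.disjoint_left, mem_Iio, mem_Ico]; intro x h1 h2; linarith),
    lintegral_gammaPDF_of_nonpos (le_refl (0:ℝ)), zero_add]
  refine setLIntegral_congr ?_
  exact (MeasureTheory.Ioo_ae_eq_Ico (a := (0:ℝ)) (b := t)).symm.trans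
    MeasureTheory.Ioo_ae_eq_Ioc

lemma gammaPDF_pos_eq (N : ℕ) {x : ℝ} (hx : 0 ≤ x) :
    gammaPDF N 1 x
      = ENNReal.ofReal (x ^ ((N:ℝ) - 1) * Real.exp (-x) / Real.Gamma N) := by
  rw [gammaPDF_of_nonneg hx]
  congr 1
  rw [Real.one_rpow]
  ring_nf

lemma hint_rpow {N : ℕ} (hN : 1 ≤ N) {t : ℝ} (ht : 0 ≤ t) (c : ℝ) :
    Integrable (fun x : ℝ => x ^ ((N:ℝ) - 1) * c) (volume.restrict (Ioc 0 t)) := by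
  have h := (intervalIntegral.intervalIntegrable_rpow'
    (a := 0) (b := t) (r := (N:ℝ) - 1) (by
      have : (1:ℝ) ≤ N := by exact_mod_cast hN
      linarith))
  exact ((intervalIntegrable_iff_integrableOn_Ioc_of_le ht).1 h).mul_const c

lemma gamma_Iio_le {N : ℕ} (hN : 1 ≤ N) {t : ℝ} (ht : 0 ≤ t) :
    (gammaMeasure N 1 (Iio t)).toReal ≤ t ^ N / Real.Gamma ((N:ℝ) + 1) := by
  have hNR : (0:ℝ) < N := by exact_mod_cast hN
  have hΓ : 0 < Real.Gamma N := Real.Gamma_pos_of_pos hNR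
  have hΓ1 : 0 < Real.Gamma ((N:ℝ) + 1) := Real.Gamma_pos_of_pos (by linarith)
  refine ENNReal.toReal_le_of_le_ofReal (by positivity) ?_
  rw [gamma_Iio_eq N ht]
  calc ∫⁻ x in Ioc (0:ℝ) t, gammaPDF N 1 x
      ≤ ∫⁻ x in Ioc (0:ℝ) t, ENNReal.ofReal (x ^ ((N:ℝ) - 1) * (1 / Real.Gamma N)) := by
        refine lintegral_mono_ae ((ae_restrict_iff' measurableSet_Ioc).2
          (ae_of_all _ fun x hx => ?_))
        rw [gammaPDF_pos_eq N hx.1.le]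
        apply ENNReal.ofReal_le_ofReal
        rw [div_eq_mul_one_div, mul_assoc]
        refine mul_le_mul_of_nonneg_left ?_ (Real.rpow_nonneg hx.1.le _)
        refine mul_le_of_le_one_left (by positivity) ?_
        exact Real.exp_le_one_iff.2 (by linarith [hx.1])
    _ = ENNReal.ofReal (∫ x in Ioc (0:ℝ) t, x ^ ((N:ℝ) - 1) * (1 / Real.Gamma N)) := by
        rw [← ofReal_integral_eq_lintegral_ofReal (hint_rpow hN ht _)
          ((ae_restrict_iff' measurableSet_Ioc).2 (ae_of_all _ fun x hx => by
            have := Real.rpow_nonneg hx.1.le ((N:ℝ) - 1)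
            positivity))]
    _ ≤ ENNReal.ofReal (t ^ N / Real.Gamma ((N:ℝ) + 1)) := by
        apply ENNReal.ofReal_le_ofReal
        rw [integral_mul_const, rpow_int_Ioc hN ht,
          Real.Gamma_add_one hNR.ne']
        rw [div_mul_eq_mul_div, mul_one_div, div_div,
          mul_comm (Real.Gamma (N:ℝ)) ((N:ℝ))]

lemma gamma_Iio_ge {N : ℕ} (hN : 1 ≤ N) {t : ℝ} (ht : 0 ≤ t) :
    Real.exp (-t) * t ^ N / Real.Gamma ((N:ℝ) + 1)
      ≤ (gammaMeasure N 1 (Iio t)).toReal := by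
  have hNR : (0:ℝ) < N := by exact_mod_cast hN
  have hΓ : 0 < Real.Gamma N := Real.Gamma_pos_of_pos hNR
  have hΓ1 : 0 < Real.Gamma ((N:ℝ) + 1) := Real.Gamma_pos_of_pos (by linarith)
  haveI : IsProbabilityMeasure (gammaMeasure N 1) :=
    isProbabilityMeasure_gammaMeasure hNR one_pos
  have hlow : ENNReal.ofReal (Real.exp (-t) * t ^ N / Real.Gamma ((N:ℝ) + 1))
      ≤ gammaMeasure N 1 (Iio t) := by
    rw [gamma_Iio_eq N ht]
    calc ENNReal.ofReal (Real.exp (-t) * t ^ N / Real.Gamma ((N:ℝ) + 1))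
        = ENNReal.ofReal
            (∫ x in Ioc (0:ℝ) t, x ^ ((N:ℝ) - 1) * (Real.exp (-t) / Real.Gamma N)) := by
          rw [integral_mul_const, rpow_int_Ioc hN ht, Real.Gamma_add_one hNR.ne']
          congr 1
          field_simp
      _ = ∫⁻ x in Ioc (0:ℝ) t,
            ENNReal.ofReal (x ^ ((N:ℝ) - 1) * (Real.exp (-t) / Real.Gamma N)) := by
          refine ofReal_integral_eq_lintegral_ofReal (hint_rpow hN ht _)
            ((ae_restrict_iff' measurableSet_Ioc).2 (ae_of_all _ fun x hx => ?_))
          have := Real.rpow_nonneg hx.1.le ((N:ℝ) - 1)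
          positivity
      _ ≤ ∫⁻ x in Ioc (0:ℝ) t, gammaPDF N 1 x := by
          refine lintegral_mono_ae ((ae_restrict_iff' measurableSet_Ioc).2
            (ae_of_all _ fun x hx => ?_))
          rw [gammaPDF_pos_eq N hx.1.le]
          apply ENNReal.ofReal_le_ofReal
          have hrw : x ^ ((N:ℝ) - 1) * Real.exp (-x) / Real.Gamma (N:ℝ)
              = x ^ ((N:ℝ) - 1) * (Real.exp (-x) * (1 / Real.Gamma (N:ℝ))) := by ring
          have hrw2 : x ^ ((N:ℝ) - 1) * (Real.exp (-t) / Real.Gamma (N:ℝ))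
              = x ^ ((N:ℝ) - 1) * (Real.exp (-t) * (1 / Real.Gamma (N:ℝ))) := by ring
          rw [hrw, hrw2]
          refine mul_le_mul_of_nonneg_left
            (mul_le_mul_of_nonneg_right (Real.exp_le_exp.2 (by linarith [hx.2]))
              (le_of_lt (by positivity : (0:ℝ) < 1 / Real.Gamma (N:ℝ))))
            (Real.rpow_nonneg hx.1.le _)
  calc Real.exp (-t) * t ^ N / Real.Gamma ((N:ℝ) + 1)
      = (ENNReal.ofReal (Real.exp (-t) * t ^ N / Real.Gamma ((N:ℝ) + 1))).toReal := by
        rw [ENNReal.toReal_ofReal (by positivity)]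
    _ ≤ (gammaMeasure N 1 (Iio t)).toReal :=
        ENNReal.toReal_mono (measure_ne_top _ _) hlow

lemma integrable_inv_sqrt_pow {N : ℕ} (hN : 1 ≤ N) :
    Integrable (fun x : ℝ => ((Real.sqrt x) ^ N)⁻¹) (gammaMeasure N 1) := by
  have hNR : (0:ℝ) < N := by exact_mod_cast hN
  have hΓ : 0 < Real.Gamma N := Real.Gamma_pos_of_pos hNR
  have hm : Measurable (gammaPDF (N:ℝ) 1) :=
    (measurable_gammaPDFReal N 1).ennreal_ofReal
  have hlt : ∀ᵐ x ∂(volume : Measure ℝ), gammaPDF (N:ℝ) 1 x < ⊤ :=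
    ae_of_all _ fun x => by rw [gammaPDF]; exact ENNReal.ofReal_lt_top
  rw [gammaMeasure, integrable_withDensity_iff hm hlt]
  have hsimp : ∀ x : ℝ, ((Real.sqrt x) ^ N)⁻¹ * (gammaPDF N 1 x).toReal
      = ((Real.sqrt x) ^ N)⁻¹ * gammaPDFReal N 1 x := fun x => by
    rw [gammaPDF, ENNReal.toReal_ofReal (gammaPDFReal_nonneg hNR one_pos x)]
  simp only [hsimp]
  have hsupp : Function.support
      (fun x : ℝ => ((Real.sqrt x) ^ N)⁻¹ * gammaPDFReal N 1 x) ⊆ Ioi 0 := by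
    intro x hx
    by_contra hx0
    simp only [mem_Ioi, not_lt] at hx0
    apply hx
    rcases lt_or_eq_of_le hx0 with h | h
    · have : gammaPDFReal N 1 x = 0 := by
        rw [gammaPDFReal, if_neg (not_le.2 h)]
      simp [this]
    · subst h
      simp [Real.sqrt_zero, zero_pow (by omega : N ≠ 0)]
  rw [← integrableOn_iff_integrable_of_support_subset hsupp]
  have hkey : IntegrableOn
      (fun x : ℝ => (1 / Real.Gamma (N:ℝ)) * (Real.exp (-x) * x ^ ((N:ℝ)/2 - 1)))
      (Ioi 0) volume :=
    (Real.GammaIntegral_convergent (by positivity : (0:ℝ) < (N:ℝ)/2)).const_mul _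
  refine hkey.congr_fun ?_ measurableSet_Ioi
  intro x hx
  have hx0 : 0 < x := hx
  have h1 : (Real.sqrt x) ^ N = x ^ ((N:ℝ)/2) := by
    rw [Real.sqrt_eq_rpow, ← Real.rpow_natCast (x ^ (1/(2:ℝ))) N,
      ← Real.rpow_mul hx0.le]
    congr 1
    ring
  have h2 : gammaPDFReal N 1 x
      = 1 / Real.Gamma (N:ℝ) * x ^ ((N:ℝ) - 1) * Real.exp (-x) := by
    rw [gammaPDFReal, if_pos hx0.le, Real.one_rpow, one_mul]
  simp only
  rw [h2, h1, ← Real.rpow_neg hx0.le]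
  have h3 : x ^ (-((N:ℝ)/2)) * (1 / Real.Gamma (N:ℝ) * x ^ ((N:ℝ) - 1) * Real.exp (-x))
      = 1 / Real.Gamma (N:ℝ) * (Real.exp (-x) * (x ^ (-((N:ℝ)/2)) * x ^ ((N:ℝ) - 1))) := by
    ring
  rw [h3, ← Real.rpow_add hx0]
  rw [show -((N:ℝ)/2) + ((N:ℝ) - 1) = (N:ℝ)/2 - 1 from by ring]

end SecondHopAux

open SecondHopAux Set

/-- Rigorous marginal high-SNR behavior of the second-hop SNR of the interference-aided
energy-harvesting relay (eqs. (66)–(71) in the proof of Theorem 5): if `X, Y, Z` are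
mutually independent `Gamma(N,1)` random variables and `a, b, κ, γ > 0` with `a ≠ b`, then
`ρ^N · Prob(κρ(aX + bY)Z < γ) → (γ/κ)^N E[(aX+bY)^{−N}]/Γ(N+1)` as `ρ → ∞`, and the
expectation `E[(aX+bY)^{−N}]` is finite. -/
theorem second_hop_high_snr
    {Ω : Type*} [MeasureSpace Ω] [IsProbabilityMeasure (ℙ : Measure Ω)]
    (N : ℕ) (hN : 1 ≤ N) (X Y Z : Ω → ℝ)
    (hindep : iIndepFun ![X, Y, Z] ℙ)
    (hX : Measure.map X ℙ = gammaMeasure N 1)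
    (hY : Measure.map Y ℙ = gammaMeasure N 1)
    (hZ : Measure.map Z ℙ = gammaMeasure N 1)
    (a b κ γ : ℝ) (ha : 0 < a) (hb : 0 < b) (hab : a ≠ b) (hκ : 0 < κ) (hγ : 0 < γ) :
    Tendsto (fun ρ : ℝ => ρ ^ N *
        (ℙ {ω | κ * ρ * (a * X ω + b * Y ω) * Z ω < γ}).toReal)
      atTop
      (nhds ((γ / κ) ^ N * (∫ ω, (a * X ω + b * Y ω) ^ (-(N : ℤ))) /
        Real.Gamma (N + 1))) ∧
    Integrable (fun ω => (a * X ω + b * Y ω) ^ (-(N : ℤ))) ℙ := by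
  classical
  have hNR : (0:ℝ) < N := by exact_mod_cast hN
  have hΓ1 : 0 < Real.Gamma ((N:ℝ) + 1) := Real.Gamma_pos_of_pos (by linarith)
  haveI hgmP : IsProbabilityMeasure (gammaMeasure (N:ℝ) 1) :=
    isProbabilityMeasure_gammaMeasure hNR one_pos
  have hgm0 : NeZero (gammaMeasure (N:ℝ) 1) := ⟨IsProbabilityMeasure.ne_zero _⟩
  -- a.e. measurable versions
  have hXm : AEMeasurable X ℙ := aemeasurable_of_map_neZero (by rw [hX]; exact hgm0)
  have hYm : AEMeasurable Y ℙ := aemeasurable_of_map_neZero (by rw [hY]; exact hgm0)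
  have hZm : AEMeasurable Z ℙ := aemeasurable_of_map_neZero (by rw [hZ]; exact hgm0)
  obtain ⟨X', hX'meas, hXX'⟩ := hXm
  obtain ⟨Y', hY'meas, hYY'⟩ := hYm
  obtain ⟨Z', hZ'meas, hZZ'⟩ := hZm
  have hmapX' : Measure.map X' ℙ = gammaMeasure N 1 := by
    rw [← Measure.map_congr hXX', hX]
  have hmapY' : Measure.map Y' ℙ = gammaMeasure N 1 := by
    rw [← Measure.map_congr hYY', hY]
  have hmapZ' : Measure.map Z' ℙ = gammaMeasure N 1 := by
    rw [← Measure.map_congr hZZ', hZ]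
  have hf'ae : ∀ i, (![X, Y, Z] : Fin 3 → Ω → ℝ) i =ᵐ[ℙ] (![X', Y', Z'] : Fin 3 → Ω → ℝ) i := by
    intro i
    fin_cases i
    · exact hXX'
    · exact hYY'
    · exact hZZ'
  have hindep' : iIndepFun ![X', Y', Z'] ℙ :=
    iIndepFun_congr_ae hf'ae hindep
  have hmeas' : ∀ i, Measurable ((![X', Y', Z'] : Fin 3 → Ω → ℝ) i) := by
    intro i
    fin_cases i
    · exact hX'meas
    · exact hY'meas
    · exact hZ'meas
  -- the sum and its law
  set φ : ℝ × ℝ → ℝ := fun p => a * p.1 + b * p.2 with hφdef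
  have hφ : Measurable φ := (measurable_fst.const_mul a).add (measurable_snd.const_mul b)
  set W' : Ω → ℝ := fun ω => a * X' ω + b * Y' ω with hW'def
  have hW'meas : Measurable W' := (hX'meas.const_mul a).add (hY'meas.const_mul b)
  have hWW' : (fun ω => a * X ω + b * Y ω) =ᵐ[ℙ] W' := by
    filter_upwards [hXX', hYY'] with ω h1 h2
    simp only [hW'def, h1, h2]
  have hIndepXY : IndepFun X' Y' ℙ := by
    have h := hindep'.indepFun (i := 0) (j := 1) (by decide)
    exact h
  have hPXY : Measure.map (fun ω => (X' ω, Y' ω)) ℙ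
      = (gammaMeasure N 1).prod (gammaMeasure N 1) := by
    have h := (ProbabilityTheory.indepFun_iff_map_prod_eq_prod_map_map
      hX'meas.aemeasurable hY'meas.aemeasurable).1 hIndepXY
    rw [hmapX', hmapY'] at h
    exact h
  have hIndepWZ : IndepFun W' Z' ℙ := by
    have h := hindep'.indepFun_prodMk hmeas' 0 1 2 (by decide) (by decide)
    have h2 := h.comp hφ measurable_id
    exact h2
  set μ : Measure ℝ := Measure.map W' ℙ with hμdef
  haveI : IsProbabilityMeasure μ := Measure.isProbabilityMeasure_map hW'meas.aemeasurable
  have hμ_phi : μ = Measure.map φ ((gammaMeasure N 1).prod (gammaMeasure N 1)) := by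
    rw [hμdef, ← hPXY, Measure.map_map hφ (hX'meas.prodMk hY'meas)]
    rfl
  have hPWZ : Measure.map (fun ω => (W' ω, Z' ω)) ℙ = μ.prod (gammaMeasure N 1) := by
    have h := (ProbabilityTheory.indepFun_iff_map_prod_eq_prod_map_map
      hW'meas.aemeasurable hZ'meas.aemeasurable).1 hIndepWZ
    rw [hmapZ'] at h
    exact h
  -- positivity
  have hsetpos : MeasurableSet {x : ℝ | 0 < x} := measurableSet_lt measurable_const measurable_id
  have hX'pos : ∀ᵐ ω ∂ℙ, 0 < X' ω := by
    refine (ae_map_iff hX'meas.aemeasurable hsetpos).1 ?_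
    rw [hmapX']
    exact gamma_pos_ae N
  have hY'pos : ∀ᵐ ω ∂ℙ, 0 < Y' ω := by
    refine (ae_map_iff hY'meas.aemeasurable hsetpos).1 ?_
    rw [hmapY']
    exact gamma_pos_ae N
  have hW'pos : ∀ᵐ ω ∂ℙ, 0 < W' ω := by
    filter_upwards [hX'pos, hY'pos] with ω h1 h2
    simp only [hW'def]
    positivity
  have hμpos : ∀ᵐ w ∂μ, 0 < w := by
    rw [hμdef]
    exact (ae_map_iff hW'meas.aemeasurable hsetpos).2 hW'pos
  have hprodpos : ∀ᵐ p ∂((gammaMeasure (N:ℝ) 1).prod (gammaMeasure (N:ℝ) 1)),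
      0 < p.1 ∧ 0 < p.2 := by
    rw [MeasureTheory.ae_iff]
    have hsub : {p : ℝ × ℝ | ¬(0 < p.1 ∧ 0 < p.2)}
        ⊆ (Iic 0 ×ˢ univ) ∪ (univ ×ˢ Iic (0:ℝ)) := by
      intro p hp
      simp only [Set.mem_setOf_eq, not_and_or, not_lt] at hp
      rcases hp with h | h
      · exact Or.inl ⟨h, trivial⟩
      · exact Or.inr ⟨trivial, h⟩
    refine measure_mono_null hsub (measure_union_null ?_ ?_) <;>
      rw [Measure.prod_prod] <;> simp [gamma_Iic_zero N]
  -- integrability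
  have hgmeas : Measurable (fun x : ℝ => (x ^ N)⁻¹) := (measurable_id.pow_const N).inv
  have hIntProd : Integrable (fun p : ℝ × ℝ => ((a * p.1 + b * p.2) ^ N)⁻¹)
      ((gammaMeasure (N:ℝ) 1).prod (gammaMeasure (N:ℝ) 1)) := by
    have h1 : Integrable
        (fun x : ℝ => ((Real.sqrt (a*b)) ^ N)⁻¹ * ((Real.sqrt x) ^ N)⁻¹)
        (gammaMeasure (N:ℝ) 1) := (integrable_inv_sqrt_pow hN).const_mul _
    have h2 := h1.mul_prod (integrable_inv_sqrt_pow hN)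
    refine Integrable.mono h2 ?_ ?_
    · exact (((hφ.pow_const N).inv).aestronglyMeasurable)
    · filter_upwards [hprodpos] with p hp
      obtain ⟨hx, hy⟩ := hp
      have hwpos : 0 < a * p.1 + b * p.2 := by positivity
      have hupos : 0 < Real.sqrt (a*b) * Real.sqrt p.1 * Real.sqrt p.2 := by positivity
      have hw : Real.sqrt (a*b) * Real.sqrt p.1 * Real.sqrt p.2 ≤ a * p.1 + b * p.2 := by
        have h3 : Real.sqrt (a*b*(p.1*p.2)) ≤ a * p.1 + b * p.2 := by
          rw [show a*p.1+b*p.2 = Real.sqrt ((a*p.1+b*p.2)^2) from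
            (Real.sqrt_sq hwpos.le).symm]
          apply Real.sqrt_le_sqrt
          nlinarith [sq_nonneg (a*p.1 - b*p.2), mul_pos (mul_pos ha hx) (mul_pos hb hy)]
        calc Real.sqrt (a*b) * Real.sqrt p.1 * Real.sqrt p.2
            = Real.sqrt (a*b*(p.1*p.2)) := by
              rw [Real.sqrt_mul (mul_pos ha hb).le, Real.sqrt_mul hx.le]
              ring
          _ ≤ a * p.1 + b * p.2 := h3
      rw [Real.norm_eq_abs, Real.norm_eq_abs, abs_of_pos (by positivity),
        abs_of_pos (by positivity)]
      have hle : ((a * p.1 + b * p.2) ^ N)⁻¹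
          ≤ ((Real.sqrt (a*b) * Real.sqrt p.1 * Real.sqrt p.2) ^ N)⁻¹ :=
        inv_anti₀ (pow_pos hupos N) (pow_le_pow_left₀ hupos.le hw N)
      calc ((a * p.1 + b * p.2) ^ N)⁻¹
          ≤ ((Real.sqrt (a*b) * Real.sqrt p.1 * Real.sqrt p.2) ^ N)⁻¹ := hle
        _ = ((Real.sqrt (a*b)) ^ N)⁻¹ * ((Real.sqrt p.1) ^ N)⁻¹ * ((Real.sqrt p.2) ^ N)⁻¹ := by
            rw [mul_pow, mul_pow, mul_inv, mul_inv]
        _ = ((Real.sqrt (a*b)) ^ N)⁻¹ * ((Real.sqrt p.1) ^ N)⁻¹ * ((Real.sqrt p.2) ^ N)⁻¹ := rfl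
  have hIntμ : Integrable (fun x : ℝ => (x ^ N)⁻¹) μ := by
    rw [hμ_phi, integrable_map_measure hgmeas.aestronglyMeasurable hφ.aemeasurable]
    exact hIntProd
  have hIntW' : Integrable (fun ω => ((W' ω) ^ N)⁻¹) ℙ := by
    have h := (integrable_map_measure hgmeas.aestronglyMeasurable
      hW'meas.aemeasurable).1 hIntμ
    exact h
  have hzpow_ae : (fun ω => (a * X ω + b * Y ω) ^ (-(N:ℤ)))
      =ᵐ[ℙ] (fun ω => ((W' ω) ^ N)⁻¹) := by
    filter_upwards [hWW'] with ω h
    rw [h, zpow_neg, zpow_natCast]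
  have hIntFinal : Integrable (fun ω => (a * X ω + b * Y ω) ^ (-(N:ℤ))) ℙ :=
    hIntW'.congr hzpow_ae.symm
  refine ⟨?_, hIntFinal⟩
  -- rewrite the limit value
  have hintEq : (∫ ω, (a * X ω + b * Y ω) ^ (-(N:ℤ)))
      = ∫ w, (w ^ N)⁻¹ ∂μ := by
    rw [integral_congr_ae hzpow_ae, hμdef,
      integral_map hW'meas.aemeasurable hgmeas.aestronglyMeasurable]
  have hLval : (γ / κ) ^ N * (∫ ω, (a * X ω + b * Y ω) ^ (-(N : ℤ))) /
      Real.Gamma ((N:ℝ) + 1)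
      = ∫ w, ((γ / κ) ^ N / Real.Gamma ((N:ℝ) + 1)) * (w ^ N)⁻¹ ∂μ := by
    rw [hintEq, integral_const_mul]
    ring
  rw [hLval]
  -- algebra helper
  have hcore : ∀ ρ w : ℝ, 0 < ρ → 0 < w →
      (ρ:ℝ) ^ N * (γ / (κ * ρ * w)) ^ N = (γ / κ) ^ N * (w ^ N)⁻¹ := by
    intro ρ w hρ hw
    rw [← mul_pow, show ρ * (γ / (κ * ρ * w)) = γ / (κ * w) from by
      field_simp]
    rw [div_pow, div_pow, mul_pow]
    field_simp
  -- eventual equality of the prelimit function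
  have heq : ∀ᶠ ρ in atTop, ρ ^ N *
      (ℙ {ω | κ * ρ * (a * X ω + b * Y ω) * Z ω < γ}).toReal
      = ∫ w, ρ ^ N * (gammaMeasure (N:ℝ) 1 (Iio (γ / (κ * ρ * w)))).toReal ∂μ := by
    filter_upwards [eventually_ge_atTop (1:ℝ)] with ρ hρ
    have hρ0 : 0 < ρ := lt_of_lt_of_le one_pos hρ
    have hsetae : ℙ {ω | κ * ρ * (a * X ω + b * Y ω) * Z ω < γ}
        = ℙ {ω | κ * ρ * W' ω * Z' ω < γ} := by
      refine measure_congr (Filter.eventuallyEq_set.2 ?_)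
      filter_upwards [hWW', hZZ'] with ω h1 h2
      rw [h1, h2]
    have hS : MeasurableSet {p : ℝ × ℝ | κ * ρ * p.1 * p.2 < γ} :=
      measurableSet_lt ((measurable_fst.const_mul _).mul measurable_snd) measurable_const
    have hmap : ℙ {ω | κ * ρ * W' ω * Z' ω < γ}
        = (μ.prod (gammaMeasure (N:ℝ) 1)) {p : ℝ × ℝ | κ * ρ * p.1 * p.2 < γ} := by
      rw [← hPWZ, Measure.map_apply_of_aemeasurable
        ((hW'meas.prodMk hZ'meas).aemeasurable) hS]
      rfl
    have hprodapply : (μ.prod (gammaMeasure (N:ℝ) 1)) {p : ℝ × ℝ | κ * ρ * p.1 * p.2 < γ}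
        = ∫⁻ w, gammaMeasure (N:ℝ) 1 {z : ℝ | κ * ρ * w * z < γ} ∂μ := by
      rw [Measure.prod_apply hS]
      rfl
    have hae2 : (fun w => gammaMeasure (N:ℝ) 1 {z : ℝ | κ * ρ * w * z < γ}) =ᵐ[μ]
        (fun w => gammaMeasure (N:ℝ) 1 (Iio (γ / (κ * ρ * w)))) := by
      filter_upwards [hμpos] with w hw
      congr 1
      ext z
      simp only [Set.mem_setOf_eq, Set.mem_Iio]
      rw [lt_div_iff₀ (by positivity : (0:ℝ) < κ * ρ * w), mul_comm z (κ * ρ * w)]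
    have hGmeas : Measurable (fun w : ℝ => gammaMeasure (N:ℝ) 1 (Iio (γ / (κ * ρ * w)))) := by
      have hm1 : Measurable fun t : ℝ => gammaMeasure (N:ℝ) 1 (Iio t) :=
        Monotone.measurable (fun s t hst => measure_mono (Iio_subset_Iio hst))
      exact hm1.comp (measurable_const.div (measurable_id.const_mul (κ * ρ)))
    rw [hsetae, hmap, hprodapply, lintegral_congr_ae hae2,
      ← integral_toReal hGmeas.aemeasurable (ae_of_all _ fun w => measure_lt_top _ _),
      integral_const_mul]
  have heq' : (fun ρ : ℝ => ∫ w, ρ ^ N *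
      (gammaMeasure (N:ℝ) 1 (Iio (γ / (κ * ρ * w)))).toReal ∂μ) =ᶠ[atTop]
      (fun ρ : ℝ => ρ ^ N *
      (ℙ {ω | κ * ρ * (a * X ω + b * Y ω) * Z ω < γ}).toReal) :=
    Filter.EventuallyEq.symm heq
  refine Filter.Tendsto.congr' heq' ?_
  -- dominated convergence
  refine tendsto_integral_filter_of_dominated_convergence
    (fun w => ((γ / κ) ^ N / Real.Gamma ((N:ℝ) + 1)) * (w ^ N)⁻¹) ?_ ?_ (hIntμ.const_mul _) ?_
  · refine Filter.Eventually.of_forall fun ρ => ?_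
    have hm1 : Measurable fun t : ℝ => (gammaMeasure (N:ℝ) 1 (Iio t)).toReal := by
      refine Monotone.measurable (fun s t hst => ?_)
      exact ENNReal.toReal_mono (measure_ne_top _ _) (measure_mono (Iio_subset_Iio hst))
    exact ((hm1.comp (measurable_const.div (measurable_id.const_mul (κ * ρ)))).const_mul
      _).aestronglyMeasurable
  · filter_upwards [eventually_ge_atTop (1:ℝ)] with ρ hρ
    have hρ0 : 0 < ρ := lt_of_lt_of_le one_pos hρ
    filter_upwards [hμpos] with w hw
    have ht0 : 0 < γ / (κ * ρ * w) := by positivity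
    rw [Real.norm_eq_abs, abs_of_nonneg
      (mul_nonneg (pow_nonneg hρ0.le N) ENNReal.toReal_nonneg)]
    calc ρ ^ N * (gammaMeasure (N:ℝ) 1 (Iio (γ / (κ * ρ * w)))).toReal
        ≤ ρ ^ N * ((γ / (κ * ρ * w)) ^ N / Real.Gamma ((N:ℝ) + 1)) :=
          mul_le_mul_of_nonneg_left (gamma_Iio_le hN ht0.le) (pow_nonneg hρ0.le N)
      _ = ((γ / κ) ^ N / Real.Gamma ((N:ℝ) + 1)) * (w ^ N)⁻¹ := by
          have harr : ρ ^ N * ((γ / (κ * ρ * w)) ^ N / Real.Gamma ((N:ℝ) + 1))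
              = (ρ ^ N * (γ / (κ * ρ * w)) ^ N) / Real.Gamma ((N:ℝ) + 1) := by ring
          rw [harr, hcore ρ w hρ0 hw]
          ring
  · filter_upwards [hμpos] with w hw
    have hterm : Tendsto (fun ρ : ℝ => γ / (κ * ρ * w)) atTop (nhds 0) := by
      have hfe : (fun ρ : ℝ => γ / (κ * ρ * w)) = fun ρ => (γ / (κ * w)) / ρ := by
        funext ρ
        rw [div_div]
        congr 1
        ring
      rw [hfe]
      exact tendsto_const_nhds.div_atTop tendsto_id
    have hexp : Tendsto (fun ρ : ℝ => Real.exp (-(γ / (κ * ρ * w)))) atTop (nhds 1) := by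
      have hneg : Tendsto (fun ρ : ℝ => -(γ / (κ * ρ * w))) atTop (nhds 0) := by
        simpa using hterm.neg
      have h := (Real.continuous_exp.tendsto 0).comp hneg
      simpa [Function.comp_def] using h
    have hlow : Tendsto (fun ρ : ℝ => Real.exp (-(γ / (κ * ρ * w))) *
        (((γ / κ) ^ N / Real.Gamma ((N:ℝ) + 1)) * (w ^ N)⁻¹)) atTop
        (nhds (((γ / κ) ^ N / Real.Gamma ((N:ℝ) + 1)) * (w ^ N)⁻¹)) := by
      simpa using hexp.mul_const (((γ / κ) ^ N / Real.Gamma ((N:ℝ) + 1)) * (w ^ N)⁻¹)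
    refine tendsto_of_tendsto_of_tendsto_of_le_of_le' hlow tendsto_const_nhds ?_ ?_
    · filter_upwards [eventually_ge_atTop (1:ℝ)] with ρ hρ
      have hρ0 : 0 < ρ := lt_of_lt_of_le one_pos hρ
      have ht0 : 0 < γ / (κ * ρ * w) := by positivity
      have hge := gamma_Iio_ge hN ht0.le
      calc Real.exp (-(γ / (κ * ρ * w))) *
            (((γ / κ) ^ N / Real.Gamma ((N:ℝ) + 1)) * (w ^ N)⁻¹)
          = ρ ^ N * (Real.exp (-(γ / (κ * ρ * w))) * (γ / (κ * ρ * w)) ^ N /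
              Real.Gamma ((N:ℝ) + 1)) := by
            have harr : ρ ^ N * (Real.exp (-(γ / (κ * ρ * w))) * (γ / (κ * ρ * w)) ^ N /
                Real.Gamma ((N:ℝ) + 1))
                = Real.exp (-(γ / (κ * ρ * w))) *
                  ((ρ ^ N * (γ / (κ * ρ * w)) ^ N) / Real.Gamma ((N:ℝ) + 1)) := by ring
            rw [harr, hcore ρ w hρ0 hw]
            ring
        _ ≤ ρ ^ N * (gammaMeasure (N:ℝ) 1 (Iio (γ / (κ * ρ * w)))).toReal :=
            mul_le_mul_of_nonneg_left hge (pow_nonneg hρ0.le N)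
    · filter_upwards [eventually_ge_atTop (1:ℝ)] with ρ hρ
      have hρ0 : 0 < ρ := lt_of_lt_of_le one_pos hρ
      have ht0 : 0 < γ / (κ * ρ * w) := by positivity
      calc ρ ^ N * (gammaMeasure (N:ℝ) 1 (Iio (γ / (κ * ρ * w)))).toReal
          ≤ ρ ^ N * ((γ / (κ * ρ * w)) ^ N / Real.Gamma ((N:ℝ) + 1)) :=
            mul_le_mul_of_nonneg_left (gamma_Iio_le hN ht0.le) (pow_nonneg hρ0.le N)
        _ = ((γ / κ) ^ N / Real.Gamma ((N:ℝ) + 1)) * (w ^ N)⁻¹ := by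
            have harr : ρ ^ N * ((γ / (κ * ρ * w)) ^ N / Real.Gamma ((N:ℝ) + 1))
                = (ρ ^ N * (γ / (κ * ρ * w)) ^ N) / Real.Gamma ((N:ℝ) + 1) := by ring
            rw [harr, hcore ρ w hρ0 hw]
            ring
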